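/- Let d be a positive integer, G a finite group, F a GCA on G^{Z^d}, and w a group word with verbal subgroup H = w(G). Then F is topologically transitive if and only if both of the following hold: (i) the restriction of F to the closed subgroup H^{Z^d} = {c ∈ G^{Z^d} : c_v ∈ H for all v ∈ Z^d} is topologically transitive, and (ii) every map F~ : (G/H)^{Z^d} → (G/H)^{Z^d} satisfying F~ ∘ pi = pi ∘ F (where pi : G^{Z^d} → (G/H)^{Z^d} is the pointwise quotient map c ↦ (c_v H)_v) is topologically transitive. -/

import Mathlib

set_option linter.unusedVariables false
set_option linter.unusedSectionVars false
set_option maxHeartbeats 2000000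

/-- A self-map `T` of a topological space `X` is topologically transitive if for all
nonempty open sets `U, V ⊆ X` there exists `n ≥ 0` with `T^n(U) ∩ V ≠ ∅`. -/
def TopologicallyTransitive {X : Type*} [TopologicalSpace X] (T : X → X) : Prop :=
  ∀ U V : Set X, IsOpen U → IsOpen V → U.Nonempty → V.Nonempty →
    ∃ n : ℕ, (T^[n] '' U ∩ V).Nonempty

/-- The verbal subgroup of `G` associated with a group word `w` (an element of the free
group on countably many generators): the subgroup generated by all values of `w`, i.e. by
the image of `w` under all homomorphisms from the free group to `G`. -/
def verbalSubgroup (G : Type*) [Group G] (w : FreeGroup ℕ) : Subgroup G :=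
  Subgroup.closure (Set.range fun φ : FreeGroup ℕ →* G => φ w)

namespace GCA

open Function Set MeasureTheory
open scoped Pointwise

abbrev Cfg (d : ℕ) (K : Type*) := (Fin d → ℤ) → K

variable {d : ℕ}

/-- cylinder set -/
def cyl {K : Type*} (x : Cfg d K) (S : Finset (Fin d → ℤ)) : Set (Cfg d K) :=
  {c | ∀ v ∈ S, c v = x v}

/-- iterated memory windows -/
def Mf (M : Finset (Fin d → ℤ)) : ℕ → Finset (Fin d → ℤ)
  | 0 => {0}
  | n + 1 => M + Mf M n

section General
variable {K : Type*}

lemma mem_cyl_self (x : Cfg d K) (S : Finset (Fin d → ℤ)) : x ∈ cyl x S := fun _ _ => rfl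

lemma cyl_mono (x : Cfg d K) {S S' : Finset (Fin d → ℤ)} (h : S ⊆ S') :
    cyl x S' ⊆ cyl x S := fun c hc v hv => hc v (h hv)

section Top
variable [TopologicalSpace K] [DiscreteTopology K]

lemma isOpen_cyl' (x : Cfg d K) (S : Finset (Fin d → ℤ)) : IsOpen (cyl x S) := by
  have heq : cyl x S = ⋂ v ∈ S, (fun c : Cfg d K => c v) ⁻¹' {x v} := by
    ext c; simp [cyl]
  rw [heq]
  exact isOpen_biInter_finset
    (fun v _ => (continuous_apply v).isOpen_preimage _ (isOpen_discrete _))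

omit [DiscreteTopology K] in
lemma exists_cyl_subset' {U : Set (Cfg d K)} (hU : IsOpen U) {x : Cfg d K} (hx : x ∈ U) :
    ∃ S : Finset (Fin d → ℤ), cyl x S ⊆ U := by
  obtain ⟨I, u, hIu, hsub⟩ := isOpen_pi_iff.mp hU x hx
  exact ⟨I, fun c hc => hsub (fun a ha => by rw [hc a ha]; exact (hIu a ha).2)⟩

end Top
end General

section IterLemmas
variable {K : Type*}
section Iter

variable (Φ : Cfg d K → Cfg d K)

section Grp
variable [Group K] (hmul : ∀ a b : Cfg d K, Φ (a * b) = Φ a * Φ b)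

include hmul

lemma phi_one : Φ 1 = 1 := by
  have h := hmul 1 1
  rw [mul_one] at h
  exact left_eq_mul.mp h

lemma iter_mul (n : ℕ) (a b : Cfg d K) : Φ^[n] (a * b) = Φ^[n] a * Φ^[n] b := by
  induction n with
  | zero => simp
  | succ n ih => rw [iterate_succ_apply', iterate_succ_apply', iterate_succ_apply', ih, hmul]

lemma iter_one (n : ℕ) : Φ^[n] 1 = 1 := by
  induction n with
  | zero => simp
  | succ n ih => rw [iterate_succ_apply', ih, phi_one Φ hmul]

lemma iter_inv (n : ℕ) (a : Cfg d K) : Φ^[n] a⁻¹ = (Φ^[n] a)⁻¹ := by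
  have h := iter_mul Φ hmul n a⁻¹ a
  rw [inv_mul_cancel, iter_one Φ hmul] at h
  exact eq_inv_of_mul_eq_one_left h.symm

end Grp

section Shift
variable (hsh : ∀ (u : Fin d → ℤ) (c : Cfg d K), Φ (fun v => c (v + u)) = fun v => Φ c (v + u))
include hsh

lemma iter_shift (n : ℕ) (u : Fin d → ℤ) (c : Cfg d K) :
    Φ^[n] (fun v => c (v + u)) = fun v => Φ^[n] c (v + u) := by
  induction n with
  | zero => simp
  | succ n ih => rw [iterate_succ_apply', iterate_succ_apply', ih, hsh]

end Shift

end Iter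
end IterLemmas

section MemoryLemma
variable {K : Type*}
section Mem2
variable [TopologicalSpace K] [DiscreteTopology K] [Finite K]
variable (Φ : Cfg d K → Cfg d K) (hc : Continuous Φ)
variable (hsh : ∀ (u : Fin d → ℤ) (c : Cfg d K), Φ (fun v => c (v + u)) = fun v => Φ c (v + u))

include hc hsh in
/-- memory window -/
lemma memory : ∃ M : Finset (Fin d → ℤ), (0 : Fin d → ℤ) ∈ M ∧
    ∀ c c' : Cfg d K, ∀ v, (∀ z ∈ M, c (v + z) = c' (v + z)) → Φ c v = Φ c' v := by
  -- local window at coordinate 0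
  have key : ∃ M₀ : Finset (Fin d → ℤ),
      ∀ c c' : Cfg d K, (∀ z ∈ M₀, c z = c' z) → Φ c 0 = Φ c' 0 := by
    have hev : Continuous (fun c : Cfg d K => Φ c 0) := (continuous_apply (0 : Fin d → ℤ)).comp hc
    -- for each c an open cylinder where the value is constant
    have hloc : ∀ c : Cfg d K, ∃ I : Finset (Fin d → ℤ),
        ∀ c' : Cfg d K, (∀ z ∈ I, c' z = c z) → Φ c' 0 = Φ c 0 := by
      intro c
      have hopen : IsOpen ((fun c : Cfg d K => Φ c 0) ⁻¹' {Φ c 0}) :=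
        hev.isOpen_preimage _ (isOpen_discrete _)
      obtain ⟨I, u, hIu, hsub⟩ := isOpen_pi_iff.mp hopen c rfl
      refine ⟨I, fun c' hc' => ?_⟩
      exact hsub (fun a ha => by rw [hc' a ha]; exact (hIu a ha).2)
    choose I hI using hloc
    -- compactness
    have hcov : (univ : Set (Cfg d K)) ⊆ ⋃ c : Cfg d K, {c' | ∀ z ∈ I c, c' z = c z} := by
      intro c _
      exact mem_iUnion.mpr ⟨c, fun z _ => rfl⟩
    obtain ⟨t, ht⟩ := IsCompact.elim_finite_subcover isCompact_univ
      (fun c : Cfg d K => {c' : Cfg d K | ∀ z ∈ I c, c' z = c z})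
      (fun c => by
        show IsOpen {c' : Cfg d K | ∀ z ∈ I c, c' z = c z}
        have heq : {c' : Cfg d K | ∀ z ∈ I c, c' z = c z} = ⋂ v ∈ I c, (fun x : Cfg d K => x v) ⁻¹' {c v} := by
          ext y; simp
        rw [heq]
        exact isOpen_biInter_finset
          (fun v _ => (continuous_apply v).isOpen_preimage _ (isOpen_discrete _))) hcov
    refine ⟨t.sup I, fun c c' hcc => ?_⟩
    obtain ⟨c₀, hc₀t, hc₀⟩ := by
      have := ht (mem_univ c); simpa using this
    have hsub : I c₀ ⊆ t.sup I := Finset.le_sup hc₀t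
    have hc'mem : ∀ z ∈ I c₀, c' z = c₀ z := by
      intro z hz
      rw [← hcc z (hsub hz)]
      exact hc₀ z hz
    rw [hI c₀ c hc₀, hI c₀ c' hc'mem]
  obtain ⟨M₀, hM₀⟩ := key
  refine ⟨insert 0 M₀, Finset.mem_insert_self _ _, fun c c' v hagree => ?_⟩
  have h1 : Φ (fun x => c (x + v)) 0 = Φ c v := by simpa using congrFun (hsh v c) 0
  have h2 : Φ (fun x => c' (x + v)) 0 = Φ c' v := by simpa using congrFun (hsh v c') 0
  rw [← h1, ← h2]
  apply hM₀
  intro z hz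
  have := hagree z (Finset.mem_insert_of_mem hz)
  simpa [add_comm] using this

end Mem2
end MemoryLemma

section IterMemLemmas
variable {K : Type*}
section IterMem

variable (Φ : Cfg d K → Cfg d K)
variable (M : Finset (Fin d → ℤ)) (hM0 : (0 : Fin d → ℤ) ∈ M)
variable (hM : ∀ c c' : Cfg d K, ∀ v, (∀ z ∈ M, c (v + z) = c' (v + z)) → Φ c v = Φ c' v)

include hM0 in
lemma zero_mem_Mf (n : ℕ) : (0 : Fin d → ℤ) ∈ Mf M n := by
  induction n with
  | zero => simp [Mf]
  | succ n ih =>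
    simp only [Mf, Finset.mem_add]
    exact ⟨0, hM0, 0, ih, by simp⟩

include hM0 in
lemma Mf_mono {m n : ℕ} (h : m ≤ n) : Mf M m ⊆ Mf M n := by
  induction n with
  | zero => simpa [Nat.le_zero.mp h] using Finset.Subset.refl _
  | succ n ih =>
    rcases Nat.lt_or_ge m (n+1) with h' | h'
    · intro z hz
      have hz' := ih (Nat.lt_succ_iff.mp h') hz
      simp only [Mf, Finset.mem_add]
      exact ⟨0, hM0, z, hz', by simp⟩
    · have : m = n + 1 := le_antisymm h h'
      subst this; exact Finset.Subset.refl _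

include hM0 hM in
lemma iter_memory (n : ℕ) (c c' : Cfg d K) (v : Fin d → ℤ)
    (h : ∀ z ∈ Mf M n, c (v + z) = c' (v + z)) : Φ^[n] c v = Φ^[n] c' v := by
  induction n generalizing c c' v with
  | zero => simpa [Mf] using h 0 (by simp [Mf])
  | succ n ih =>
    rw [iterate_succ_apply', iterate_succ_apply']
    apply hM
    intro z hz
    apply ih
    intro z' hz'
    have : z + z' ∈ Mf M (n+1) := by
      simp only [Mf, Finset.mem_add]
      exact ⟨z, hz, z', hz', rfl⟩
    have := h _ this
    simpa [add_assoc] using this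

end IterMem
end IterMemLemmas

section SurjLemma
variable {K : Type*}
section Surj
variable [Group K] [Finite K] [TopologicalSpace K] [DiscreteTopology K]
variable (Φ : Cfg d K → Cfg d K) (hc : Continuous Φ)

include hc in
lemma surj_of_TT (hd : 0 < d) (hT : TopologicallyTransitive Φ) : Function.Surjective Φ := by
  classical
  rcases subsingleton_or_nontrivial K with hK | hK
  · intro y
    exact ⟨y, funext fun v => Subsingleton.elim _ _⟩
  · by_contra hns
    rw [Function.Surjective] at hns
    push_neg at hns
    obtain ⟨q, hq⟩ := hns
    have hclosed : IsClosed (Set.range Φ) := by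
      have : IsCompact (Set.range Φ) := isCompact_range hc
      exact this.isClosed
    have hqmem : q ∈ (Set.range Φ)ᶜ := by
      intro hmem
      obtain ⟨x, hx⟩ := hmem
      exact hq x hx
    obtain ⟨T₁, hT₁⟩ := exists_cyl_subset' hclosed.isOpen_compl hqmem
    -- pick v₀ outside T₁
    have hne : Nonempty (Fin d) := ⟨⟨0, hd⟩⟩
    have hinf : Infinite (Fin d → ℤ) :=
      Infinite.of_injective (fun n : ℤ => fun _ : Fin d => n)
        (fun a b hab => congrFun hab hne.some)
    obtain ⟨v₀, hv₀⟩ := T₁.exists_notMem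
    obtain ⟨a, b, hab⟩ := exists_pair_ne K
    let q' : Cfg d K := Function.update q v₀ (if q v₀ = a then b else a)
    have hqv₀ : q' v₀ ≠ q v₀ := by
      simp only [q', Function.update_self]
      split_ifs with h
      · rw [h]; exact hab.symm
      · exact Ne.symm h
    have hq'T₁ : ∀ v ∈ T₁, q' v = q v := by
      intro v hv
      have : v ≠ v₀ := fun h => hv₀ (h ▸ hv)
      simp [q', Function.update_of_ne this]
    set T₂ : Finset (Fin d → ℤ) := insert v₀ T₁ with hT₂
    have hdisj : cyl q T₂ ∩ cyl q' T₂ = ∅ := by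
      ext c
      simp only [Set.mem_inter_iff, Set.mem_empty_iff_false, iff_false, not_and]
      intro hcq hcq'
      have h1 := hcq v₀ (Finset.mem_insert_self _ _)
      have h2 := hcq' v₀ (Finset.mem_insert_self _ _)
      exact hqv₀ (h2 ▸ h1 ▸ rfl)
    have hsub1 : cyl q T₂ ⊆ (Set.range Φ)ᶜ :=
      fun c hcel => hT₁ (fun v hv => hcel v (Finset.mem_insert_of_mem hv))
    have hsub2 : cyl q' T₂ ⊆ (Set.range Φ)ᶜ := by
      intro c hcel
      apply hT₁
      intro v hv
      rw [hcel v (Finset.mem_insert_of_mem hv)]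
      exact hq'T₁ v hv
    obtain ⟨n, y, hy⟩ := hT (cyl q T₂) (cyl q' T₂) (isOpen_cyl' _ _) (isOpen_cyl' _ _)
      ⟨q, fun _ _ => rfl⟩ ⟨q', fun _ _ => rfl⟩
    obtain ⟨⟨x, hxU, hxy⟩, hyV⟩ := hy
    rcases Nat.eq_zero_or_pos n with hn | hn
    · subst hn
      simp only [Function.iterate_zero, id] at hxy
      subst hxy
      have : x ∈ cyl q T₂ ∩ cyl q' T₂ := ⟨hxU, hyV⟩
      rw [hdisj] at this
      exact this
    · have : y ∈ Set.range Φ := by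
        obtain ⟨m, hm⟩ := Nat.exists_eq_succ_of_ne_zero hn.ne'
        subst hm
        rw [Function.iterate_succ_apply'] at hxy
        exact ⟨_, hxy⟩
      exact hsub2 hyV this
end Surj
end SurjLemma

section SyndLemma
variable {K : Type*}
section Synd
variable [Group K] [Finite K] [TopologicalSpace K] [DiscreteTopology K]

variable (Φ : Cfg d K → Cfg d K) (hc : Continuous Φ)
  (hmul : ∀ a b : Cfg d K, Φ (a * b) = Φ a * Φ b)

include hc hmul in
lemma syndetic (hd : 0 < d) (hT : TopologicallyTransitive Φ) (U V : Set (Cfg d K))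
    (hU : IsOpen U) (hV : IsOpen V) (hUne : U.Nonempty) (hVne : V.Nonempty) :
    ∃ Kg : ℕ, ∀ m : ℕ, ∃ n x, m ≤ n ∧ n ≤ m + Kg ∧ x ∈ U ∧ Φ^[n] x ∈ V := by
  classical
  haveI : IsTopologicalGroup K :=
    { continuous_mul := continuous_of_discreteTopology
      continuous_inv := continuous_of_discreteTopology }
  haveI : Fintype K := Fintype.ofFinite K
  obtain ⟨k, y₁, ⟨x₁, hx₁U, hx₁y⟩, hy₁V⟩ := hT U V hU hV hUne hVne
  have hx₁W : x₁ ∈ U ∩ Φ^[k] ⁻¹' V := ⟨hx₁U, by rw [Set.mem_preimage, hx₁y]; exact hy₁V⟩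
  have hWopen : IsOpen (U ∩ Φ^[k] ⁻¹' V) := hU.inter ((hc.iterate k).isOpen_preimage V hV)
  obtain ⟨T, hT'⟩ := exists_cyl_subset' hWopen hx₁W
  set A₀ : Set (Cfg d K) := cyl x₁ T with hA₀
  have hA₀sub : A₀ ⊆ U ∩ Φ^[k] ⁻¹' V := hT'
  set N' : ℕ → Prop := fun n => (A₀ ∩ Φ^[n] ⁻¹' A₀).Nonempty with hN'
  -- main claim
  have claim : ∃ Kg : ℕ, ∀ m : ℕ, ∃ n, m ≤ n ∧ n ≤ m + Kg ∧ N' n := by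
    by_contra hcon
    push_neg at hcon
    -- hcon : ∀ Kg, ∃ m, ∀ n, m ≤ n → n ≤ m + Kg → ¬ N' n
    choose f hf using hcon
    set seq : ℕ → ℕ := fun i => Nat.rec 0 (fun _ ni => f ni + ni) i with hseq
    have hseq0 : seq 0 = 0 := rfl
    have hseqS : ∀ i, seq (i+1) = f (seq i) + seq i := fun i => rfl
    have hmono : Monotone seq := by
      apply monotone_nat_of_le_succ
      intro i
      rw [hseqS]
      exact Nat.le_add_left _ _
    have hkey : ∀ i j, i < j → ¬ N' (seq j - seq i) := by
      intro i j hij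
      obtain ⟨l, rfl⟩ := Nat.exists_eq_add_of_lt hij
      -- j = i + l + 1
      intro hN
      set jj := i + l
      have h1 : seq i ≤ seq jj := hmono (Nat.le_add_right _ _)
      have hd1 : seq (jj+1) - seq i = f (seq jj) + (seq jj - seq i) := by
        rw [hseqS]; omega
      have := hf (seq jj) (seq (jj+1) - seq i) (by omega) (by omega)
      exact this hN
    -- measure theory
    have hsurj : Function.Surjective Φ := surj_of_TT Φ hc hd hT
    borelize (Cfg d K)
    set μ : Measure (Cfg d K) := Measure.haar with hμ
    set I₀ : ℕ := Fintype.card ({ x // x ∈ T } → K) with hI₀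
    set D : Set (Cfg d K) := cyl (1 : Cfg d K) T with hD
    set E : ℕ → Set (Cfg d K) := fun n => Φ^[n] ⁻¹' D with hE
    -- coset description
    have hcoset : ∀ (n : ℕ) (y₀ x₀ : Cfg d K), Φ^[n] x₀ ∈ cyl y₀ T →
        Φ^[n] ⁻¹' (cyl y₀ T) = (fun z => x₀⁻¹ * z) ⁻¹' (E n) := by
      intro n y₀ x₀ hx₀
      ext z
      simp only [Set.mem_preimage, hE, hD, cyl, Set.mem_setOf_eq]
      rw [iter_mul Φ hmul, iter_inv Φ hmul]
      constructor
      · intro hz v hv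
        have h1 : Φ^[n] x₀ v = y₀ v := hx₀ v hv
        have h2 : Φ^[n] z v = y₀ v := hz v hv
        show (Φ^[n] x₀)⁻¹ v * Φ^[n] z v = (1 : Cfg d K) v
        simp [Pi.inv_apply, h1, h2]
      · intro hz v hv
        have := hz v hv
        have h1 : Φ^[n] x₀ v = y₀ v := hx₀ v hv
        simp only [Pi.mul_apply, Pi.inv_apply, Pi.one_apply] at this
        have : Φ^[n] z v = Φ^[n] x₀ v := by
          have := mul_eq_one_iff_inv_eq.mp this
          rw [inv_inv] at this
          exact this.symm
        rw [this, h1]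
    have hμcoset : ∀ (n : ℕ) (y₀ x₀ : Cfg d K), Φ^[n] x₀ ∈ cyl y₀ T →
        μ (Φ^[n] ⁻¹' (cyl y₀ T)) = μ (E n) := by
      intro n y₀ x₀ hx₀
      rw [hcoset n y₀ x₀ hx₀]
      exact measure_preimage_mul μ x₀⁻¹ _
    -- covering bound
    have hcover : ∀ n : ℕ, μ Set.univ ≤ (I₀ : ENNReal) * μ (E n) := by
      intro n
      have hcov : (Set.univ : Set (Cfg d K)) ⊆
          ⋃ q ∈ (Finset.univ : Finset ({ x // x ∈ T } → K)),
            Φ^[n] ⁻¹' (cyl (fun v => if h : v ∈ T then q ⟨v, h⟩ else 1) T) := by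
        intro c _
        refine Set.mem_biUnion (Finset.mem_univ (fun s => Φ^[n] c s.1)) ?_
        intro v hv
        simp [hv]
      calc μ Set.univ ≤ ∑ q ∈ (Finset.univ : Finset ({ x // x ∈ T } → K)),
            μ (Φ^[n] ⁻¹' (cyl (fun v => if h : v ∈ T then q ⟨v, h⟩ else 1) T)) :=
          le_trans (measure_mono hcov) (measure_biUnion_finset_le _ _)
        _ ≤ (Finset.univ : Finset ({ x // x ∈ T } → K)).card • μ (E n) := by
          apply Finset.sum_le_card_nsmul
          intro q _
          set yq : Cfg d K := fun v => if h : v ∈ T then q ⟨v, h⟩ else 1 with hyq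
          rcases Set.eq_empty_or_nonempty (Φ^[n] ⁻¹' (cyl yq T)) with hemp | ⟨z₀, hz₀⟩
          · rw [hemp]; simp
          · rw [hμcoset n yq z₀ hz₀]
        _ = (I₀ : ENNReal) * μ (E n) := by
          rw [hI₀, Finset.card_univ, nsmul_eq_mul]
    -- the disjoint sets
    set XX : ℕ → Set (Cfg d K) := fun i => Φ^[seq i] ⁻¹' A₀ with hXX
    have hXXμ : ∀ i, μ (XX i) = μ (E (seq i)) := by
      intro i
      obtain ⟨b, hb⟩ := (hsurj.iterate (seq i)) x₁
      exact hμcoset (seq i) x₁ b (by rw [hb]; exact fun v hv => rfl)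
    have hXXmeas : ∀ i, MeasurableSet (XX i) :=
      fun i => ((hc.iterate (seq i)).measurable) (isOpen_cyl' x₁ T).measurableSet
    have hdisj : (↑(Finset.range (I₀ + 1)) : Set ℕ).PairwiseDisjoint XX := by
      intro i hi j hj hij
      wlog hlt : i < j generalizing i j
      · exact (this hj hi hij.symm (by omega)).symm
      apply Set.disjoint_left.mpr
      intro z hzi hzj
      apply hkey i j hlt
      refine ⟨Φ^[seq i] z, hzi, ?_⟩
      show Φ^[seq j - seq i] (Φ^[seq i] z) ∈ A₀
      rw [← Function.iterate_add_apply, Nat.sub_add_cancel (hmono hlt.le)]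
      exact hzj
    have hsum : ∑ i ∈ Finset.range (I₀ + 1), μ (XX i) ≤ μ Set.univ := by
      rw [← measure_biUnion_finset hdisj (fun i _ => hXXmeas i)]
      exact measure_mono (Set.subset_univ _)
    -- contradiction
    have hbound : ∀ i ∈ Finset.range (I₀ + 1), μ Set.univ ≤ (I₀ : ENNReal) * μ (XX i) := by
      intro i _
      rw [hXXμ i]
      exact hcover (seq i)
    have h1 : ((I₀ + 1 : ℕ) : ENNReal) * μ Set.univ ≤ (I₀ : ENNReal) * ∑ i ∈ Finset.range (I₀+1), μ (XX i) := by
      rw [Finset.mul_sum]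
      calc ((I₀ + 1 : ℕ) : ENNReal) * μ Set.univ
          = ∑ _i ∈ Finset.range (I₀+1), μ Set.univ := by
            rw [Finset.sum_const, Finset.card_range, nsmul_eq_mul]
        _ ≤ ∑ i ∈ Finset.range (I₀+1), (I₀ : ENNReal) * μ (XX i) :=
            Finset.sum_le_sum hbound
    have h2 : ((I₀ + 1 : ℕ) : ENNReal) * μ Set.univ ≤ (I₀ : ENNReal) * μ Set.univ :=
      le_trans h1 (mul_le_mul_right hsum _)
    have hμuniv_ne_top : μ Set.univ ≠ ⊤ := measure_ne_top μ _
    have hμuniv_ne_zero : μ Set.univ ≠ 0 :=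
      IsOpen.measure_ne_zero μ isOpen_univ ⟨1, trivial⟩
    have h3 : ((I₀ + 1 : ℕ) : ENNReal) * μ Set.univ = (I₀ : ENNReal) * μ Set.univ + μ Set.univ := by
      push_cast
      ring
    rw [h3] at h2
    have h4 : (I₀ : ENNReal) * μ Set.univ ≠ ⊤ :=
      ENNReal.mul_ne_top (by simp) hμuniv_ne_top
    have h5 : μ Set.univ ≤ 0 := by
      have := ENNReal.add_le_add_iff_left h4 (b := μ Set.univ) (c := 0)
      rw [add_zero] at this
      exact this.mp h2
    exact hμuniv_ne_zero (le_antisymm h5 zero_le)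
  -- assemble
  obtain ⟨Kg, hKg⟩ := claim
  refine ⟨Kg + k, fun m => ?_⟩
  obtain ⟨n', hn'1, hn'2, y, hyA, hyA'⟩ := hKg m
  refine ⟨n' + k, y, by omega, by omega, (hA₀sub hyA).1, ?_⟩
  rw [add_comm n' k, Function.iterate_add_apply]
  exact (hA₀sub hyA').2
end Synd
end SyndLemma

section ThickLemma
variable {K : Type*}
section Thick
variable [Group K] [Finite K] [TopologicalSpace K] [DiscreteTopology K]

variable (Φ : Cfg d K → Cfg d K) (hc : Continuous Φ)
  (hmul : ∀ a b : Cfg d K, Φ (a * b) = Φ a * Φ b)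
  (hsh : ∀ (u : Fin d → ℤ) (c : Cfg d K), Φ (fun v => c (v + u)) = fun v => Φ c (v + u))

include hc hmul hsh in
lemma thickFull (hd : 0 < d) (hT : TopologicallyTransitive Φ)
    (S : Finset (Fin d → ℤ)) (L : ℕ) :
    ∃ r : ℕ, ∀ j, j ≤ L → ∀ p : Cfg d K, ∃ g : Cfg d K,
      (∀ v ∈ S, g v = 1) ∧ (∀ v ∈ S, Φ^[r+j] g v = p v) := by
  classical
  haveI : Fintype K := Fintype.ofFinite K
  rcases subsingleton_or_nontrivial K with hK | hK
  · exact ⟨0, fun j _ p => ⟨1, fun v _ => rfl, fun v _ => Subsingleton.elim _ _⟩⟩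
  obtain ⟨M, hM0, hM⟩ := memory Φ hc hsh
  have hsurj : Function.Surjective Φ := surj_of_TT Φ hc hd hT
  set P := (Fin (L+1)) × ({ x // x ∈ S } → K) with hP
  set ext : ({ x // x ∈ S } → K) → Cfg d K :=
    fun q v => if h : v ∈ S then q ⟨v, h⟩ else 1 with hext
  -- choose preimages
  have hw : ∀ κ : P, ∃ wκ : Cfg d K, Φ^[(κ.1 : ℕ)] wκ = ext κ.2 :=
    fun κ => (hsurj.iterate (κ.1 : ℕ)) (ext κ.2)
  choose w hwspec using hw
  -- spreading
  set f0 : Fin d := ⟨0, hd⟩ with hf0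
  set B : Finset (Fin d → ℤ) := S + Mf M L with hB
  set Rb : ℕ := B.sup (fun v => (v f0).natAbs) with hRb
  have hBbound : ∀ v ∈ B, |v f0| ≤ (Rb : ℤ) := by
    intro v hv
    rw [Int.abs_eq_natAbs]
    exact_mod_cast Finset.le_sup (f := fun v => (v f0).natAbs) hv
  set Dt : ℕ → (Fin d → ℤ) := fun i => fun l => if l = f0 then (i : ℤ) * (2*(Rb:ℤ)+1) else 0 with hDt
  set eP : P ≃ Fin (Fintype.card P) := Fintype.equivFin P with heP
  set u : P → (Fin d → ℤ) := fun κ => Dt (eP κ) with hu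
  -- disjointness
  have hdisjoint : ∀ (κ κ' : P) (s s' : Fin d → ℤ), s ∈ B → s' ∈ B →
      s + u κ = s' + u κ' → κ = κ' ∧ s = s' := by
    intro κ κ' s s' hs hs' heq
    have h0 := congrFun heq f0
    have h0' : s f0 + ((eP κ : ℕ) : ℤ) * (2*(Rb:ℤ)+1) = s' f0 + ((eP κ' : ℕ) : ℤ) * (2*(Rb:ℤ)+1) := by
      simpa [hu, hDt] using h0
    obtain ⟨hb1a, hb1b⟩ := abs_le.mp (hBbound s hs)
    obtain ⟨hb2a, hb2b⟩ := abs_le.mp (hBbound s' hs')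
    have hRbnn : (0 : ℤ) ≤ (Rb : ℤ) := Int.ofNat_nonneg _
    have hee : (eP κ : ℕ) = (eP κ' : ℕ) := by
      by_contra hne
      have hne' : (((eP κ : ℕ)) : ℤ) ≠ (((eP κ' : ℕ)) : ℤ) := by exact_mod_cast hne
      rcases lt_or_gt_of_ne hne' with h | h
      · have h1 : (1:ℤ) ≤ (((eP κ' : ℕ)) : ℤ) - (((eP κ : ℕ)) : ℤ) := by
          have := Int.add_one_le_iff.mpr h; linarith
        have key : (2*(Rb:ℤ)+1) ≤ ((((eP κ' : ℕ)) : ℤ) - (((eP κ : ℕ)) : ℤ)) * (2*(Rb:ℤ)+1) := by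
          have h2 : (0:ℤ) ≤ 2*(Rb:ℤ)+1 := by linarith
          exact le_mul_of_one_le_left h2 h1
        have heq3 : ((((eP κ' : ℕ)) : ℤ) - (((eP κ : ℕ)) : ℤ)) * (2*(Rb:ℤ)+1) = s f0 - s' f0 := by
          rw [sub_mul]; linarith
        linarith
      · have h1 : (1:ℤ) ≤ (((eP κ : ℕ)) : ℤ) - (((eP κ' : ℕ)) : ℤ) := by
          have := Int.add_one_le_iff.mpr h; linarith
        have key : (2*(Rb:ℤ)+1) ≤ ((((eP κ : ℕ)) : ℤ) - (((eP κ' : ℕ)) : ℤ)) * (2*(Rb:ℤ)+1) := by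
          have h2 : (0:ℤ) ≤ 2*(Rb:ℤ)+1 := by linarith
          exact le_mul_of_one_le_left h2 h1
        have heq3 : ((((eP κ : ℕ)) : ℤ) - (((eP κ' : ℕ)) : ℤ)) * (2*(Rb:ℤ)+1) = s' f0 - s f0 := by
          rw [sub_mul]; linarith
        linarith
    have hκ : κ = κ' := eP.injective (Fin.ext hee)
    subst hκ
    exact ⟨rfl, add_right_cancel heq⟩
  -- the target configuration
  set bstar : Cfg d K := fun z =>
    if h : ∃ κ : P, z - u κ ∈ S + Mf M (κ.1 : ℕ) then
      w h.choose (z - u h.choose) else 1 with hbstar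
  have hbeval : ∀ κ : P, ∀ y ∈ S + Mf M (κ.1 : ℕ), bstar (y + u κ) = w κ y := by
    intro κ y hy
    have hyy : (y + u κ) - u κ = y := add_sub_cancel_right y (u κ)
    have hex : ∃ κ' : P, (y + u κ) - u κ' ∈ S + Mf M (κ'.1 : ℕ) := ⟨κ, by rw [hyy]; exact hy⟩
    rw [hbstar]
    simp only [dif_pos hex]
    have hκ₀spec := hex.choose_spec
    have hmemB : ∀ (κ' : P) (z : Fin d → ℤ), z ∈ S + Mf M (κ'.1 : ℕ) → z ∈ B := by
      intro κ' z hz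
      rw [hB]
      rw [Finset.mem_add] at hz ⊢
      obtain ⟨a, ha, b, hb, rfl⟩ := hz
      exact ⟨a, ha, b, Mf_mono M hM0 (Nat.lt_succ_iff.mp (κ'.1.isLt)) hb, rfl⟩
    have heq2 : ((y + u κ) - u hex.choose) + u hex.choose = y + u κ := sub_add_cancel _ _
    obtain ⟨hκeq, hseq⟩ := hdisjoint hex.choose κ ((y + u κ) - u hex.choose) y
      (hmemB hex.choose _ hκ₀spec) (hmemB κ _ hy) heq2
    rw [hκeq, hyy]
  -- windows
  set WA : Finset (Fin d → ℤ) := Finset.univ.biUnion (fun κ : P => S.image (· + u κ)) with hWA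
  set WB : Finset (Fin d → ℤ) :=
    Finset.univ.biUnion (fun κ : P => (S + Mf M (κ.1 : ℕ)).image (· + u κ)) with hWB
  -- transitivity application
  obtain ⟨n, y₂, ⟨g₁, hg₁A, hg₁y⟩, hy₂B⟩ := hT (cyl (1 : Cfg d K) WA) (cyl bstar WB)
    (isOpen_cyl' _ _) (isOpen_cyl' _ _) ⟨1, fun _ _ => rfl⟩ ⟨bstar, fun _ _ => rfl⟩
  refine ⟨n, ?_⟩
  intro j hj p
  set κ : P := (⟨j, Nat.lt_succ_of_le hj⟩, fun s => p s.1) with hκdef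
  set g : Cfg d K := fun v => g₁ (v + u κ) with hgdef
  refine ⟨g, ?_, ?_⟩
  · intro v hv
    have : v + u κ ∈ WA := by
      rw [hWA, Finset.mem_biUnion]
      exact ⟨κ, Finset.mem_univ _, Finset.mem_image.mpr ⟨v, hv, rfl⟩⟩
    exact hg₁A _ this
  · intro v hv
    -- Φ^[n] g agrees with w κ on S + Mf M j
    have hagree : ∀ y ∈ S + Mf M j, Φ^[n] g y = w κ y := by
      intro y hy
      have h1 : Φ^[n] g y = Φ^[n] g₁ (y + u κ) := by
        rw [hgdef]
        exact congrFun (iter_shift Φ hsh n (u κ) g₁) y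
      have h2 : y + u κ ∈ WB := by
        rw [hWB, Finset.mem_biUnion]
        refine ⟨κ, Finset.mem_univ _, Finset.mem_image.mpr ⟨y, ?_, rfl⟩⟩
        simpa [hκdef] using hy
      have h3 : Φ^[n] g₁ (y + u κ) = bstar (y + u κ) := by
        rw [hg₁y]; exact hy₂B _ h2
      rw [h1, h3]
      exact hbeval κ y (by simpa [hκdef] using hy)
    have hiter : Φ^[n+j] g v = Φ^[j] (Φ^[n] g) v := by
      rw [add_comm n j, Function.iterate_add_apply]
    have hmemo : Φ^[j] (Φ^[n] g) v = Φ^[j] (w κ) v := by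
      apply iter_memory Φ M hM0 hM
      intro z hz
      apply hagree
      rw [Finset.mem_add]
      exact ⟨v, hv, z, hz, rfl⟩
    have hfin : Φ^[j] (w κ) v = p v := by
      have h3 : Φ^[(κ.1 : ℕ)] (w κ) = ext κ.2 := hwspec κ
      have h4 : (κ.1 : ℕ) = j := rfl
      rw [h4] at h3
      rw [h3, hext]
      simp only [dif_pos hv]
      rfl
    rw [hiter, hmemo, hfin]
end Thick
end ThickLemma

section UF
-- helper: prod over range of getD equals prod of map
lemma prod_range_getD {A : Type*} {G : Type*} [Monoid G] (l : List A) (dflt : A) (f : A → G) :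
    ((List.range l.length).map (fun k => f (l.getD k dflt))).prod = (l.map f).prod := by
  induction l with
  | nil => simp
  | cons a t ih =>
    rw [List.length_cons, List.range_succ_eq_map]
    simp only [List.map_cons, List.prod_cons, List.map_map]
    rw [← ih]
    congr 1

variable {G : Type*} [Group G] [Finite G] (w : FreeGroup ℕ)

lemma exists_pairs {h : G} (hh : h ∈ verbalSubgroup G w) :
    ∃ l : List ((FreeGroup ℕ →* G) × (FreeGroup ℕ →* G)),
      (l.map (fun ab => ab.1 w * (ab.2 w)⁻¹)).prod = h := by
  induction hh using Subgroup.closure_induction with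
  | mem x hx =>
    obtain ⟨φ, hφ⟩ := hx
    exact ⟨[(φ, 1)], by simp [hφ]⟩
  | one => exact ⟨[], by simp⟩
  | mul x y hx hy ihx ihy =>
    obtain ⟨l₁, hl₁⟩ := ihx
    obtain ⟨l₂, hl₂⟩ := ihy
    exact ⟨l₁ ++ l₂, by rw [List.map_append, List.prod_append, hl₁, hl₂]⟩
  | inv x hx ihx =>
    obtain ⟨l, hl⟩ := ihx
    refine ⟨l.reverse.map Prod.swap, ?_⟩
    rw [← hl, List.prod_inv_reverse, ← List.map_reverse, ← List.map_reverse,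
      List.map_map, List.map_map]
    congr 1
    apply List.map_congr_left
    intro ab _
    simp [mul_inv_rev]

/-- uniform factorization -/
lemma uniform_fact :
    ∃ L : ℕ, ∀ h : G, h ∈ verbalSubgroup G w →
      ∃ α β : ℕ → (FreeGroup ℕ →* G),
        ((List.range L).map (fun k => α k w * (β k w)⁻¹)).prod = h := by
  classical
  haveI : Fintype G := Fintype.ofFinite G
  -- each element has some length
  have hper : ∀ h : G, ∃ L : ℕ, h ∈ verbalSubgroup G w →
      ∃ α β : ℕ → (FreeGroup ℕ →* G),
        ((List.range L).map (fun k => α k w * (β k w)⁻¹)).prod = h := by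
    intro h
    by_cases hh : h ∈ verbalSubgroup G w
    · obtain ⟨l, hl⟩ := exists_pairs w hh
      refine ⟨l.length, fun _ => ?_⟩
      refine ⟨fun k => (l.getD k (1,1)).1, fun k => (l.getD k (1,1)).2, ?_⟩
      rw [prod_range_getD l (1,1) (fun ab => ab.1 w * (ab.2 w)⁻¹)] at *
      · exact hl
    · exact ⟨0, fun hcon => absurd hcon hh⟩
  choose Lf hLf using hper
  refine ⟨Finset.univ.sup Lf, fun h hh => ?_⟩
  obtain ⟨α, β, hαβ⟩ := hLf h hh
  have hle : Lf h ≤ Finset.univ.sup Lf := Finset.le_sup (Finset.mem_univ h)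
  -- pad
  refine ⟨fun k => if k < Lf h then α k else 1, fun k => if k < Lf h then β k else 1, ?_⟩
  obtain ⟨m, hm⟩ := Nat.exists_eq_add_of_le hle
  rw [hm, List.range_add, List.map_append, List.prod_append]
  have h1 : ((List.range (Lf h)).map
      (fun k => (if k < Lf h then α k else 1) w * ((if k < Lf h then β k else 1) w)⁻¹)).prod
      = ((List.range (Lf h)).map (fun k => α k w * (β k w)⁻¹)).prod := by
    congr 1
    apply List.map_congr_left
    intro k hk
    rw [List.mem_range] at hk
    simp [hk]
  have h2 : (((List.range m).map (fun x => Lf h + x)).map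
      (fun k => (if k < Lf h then α k else 1) w * ((if k < Lf h then β k else 1) w)⁻¹)).prod = 1 := by
    apply List.prod_eq_one
    intro x hx
    simp only [List.mem_map, List.mem_range] at hx
    obtain ⟨i, ⟨a, ha, rfl⟩, rfl⟩ := hx
    have hni : ¬ (Lf h + a < Lf h) := by omega
    rw [if_neg hni, if_neg hni]
    simp
  rw [h1, h2, hαβ, mul_one]


end UF

section FwdAll
variable {G : Type*}
section Fwd
variable [Group G] [Finite G]

variable (w : FreeGroup ℕ)

/-- the verbal subgroup is invariant under every endomorphism of the configuration group -/
lemma verbal_invariant (Ff : Cfg d G →* Cfg d G) (c : Cfg d G)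
    (hc : ∀ v, c v ∈ verbalSubgroup G w) : ∀ v, Ff c v ∈ verbalSubgroup G w := by
  classical
  obtain ⟨L, hL⟩ := uniform_fact (G := G) w
  -- choose factorizations per coordinate
  have hch : ∀ v : Fin d → ℤ, ∃ αβ : (ℕ → (FreeGroup ℕ →* G)) × (ℕ → (FreeGroup ℕ →* G)),
      ((List.range L).map (fun k => αβ.1 k w * (αβ.2 k w)⁻¹)).prod = c v := by
    intro v
    obtain ⟨α, β, hs⟩ := hL (c v) (hc v)
    exact ⟨(α, β), hs⟩
  choose αβ hαβ using hch
  -- assemble pi homs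
  set φ : ℕ → (FreeGroup ℕ →* Cfg d G) := fun k =>
    { toFun := fun x v => (αβ v).1 k x
      map_one' := by funext v; exact ((αβ v).1 k).map_one
      map_mul' := fun a b => by funext v; exact ((αβ v).1 k).map_mul a b } with hφ
  set ψ : ℕ → (FreeGroup ℕ →* Cfg d G) := fun k =>
    { toFun := fun x v => (αβ v).2 k x
      map_one' := by funext v; exact ((αβ v).2 k).map_one
      map_mul' := fun a b => by funext v; exact ((αβ v).2 k).map_mul a b } with hψ
  have hrep : ((List.range L).map (fun k => φ k w * (ψ k w)⁻¹)).prod = c := by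
    funext v
    have h0 : (((List.range L).map (fun k => φ k w * (ψ k w)⁻¹)).prod) v
        = (Pi.evalMonoidHom (fun _ : Fin d → ℤ => G) v)
            (((List.range L).map (fun k => φ k w * (ψ k w)⁻¹)).prod) := rfl
    rw [h0, map_list_prod, List.map_map, ← hαβ v]
    apply congrArg List.prod
    apply List.map_congr_left
    intro k _
    rfl
  -- now push through Ff
  intro v
  rw [← hrep]
  have h0 : Ff (((List.range L).map (fun k => φ k w * (ψ k w)⁻¹)).prod) v
      = ((Pi.evalMonoidHom (fun _ : Fin d → ℤ => G) v).comp Ff)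
          (((List.range L).map (fun k => φ k w * (ψ k w)⁻¹)).prod) := rfl
  rw [h0, map_list_prod, List.map_map]
  apply Subgroup.list_prod_mem
  intro x hx
  simp only [List.mem_map, List.mem_range] at hx
  obtain ⟨k, hk, rfl⟩ := hx
  have h1 : (((Pi.evalMonoidHom (fun _ : Fin d → ℤ => G) v).comp Ff) ∘
        (fun k => (φ k) w * ((ψ k) w)⁻¹)) k
      = (((Pi.evalMonoidHom (fun _ : Fin d → ℤ => G) v).comp Ff).comp (φ k)) w
        * ((((Pi.evalMonoidHom (fun _ : Fin d → ℤ => G) v).comp Ff).comp (ψ k)) w)⁻¹ := by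
    show ((Pi.evalMonoidHom (fun _ : Fin d → ℤ => G) v).comp Ff) ((φ k) w * ((ψ k) w)⁻¹) = _
    rw [map_mul, map_inv]
    rfl
  rw [h1]
  exact mul_mem (Subgroup.subset_closure ⟨_, rfl⟩)
    (inv_mem (Subgroup.subset_closure ⟨_, rfl⟩))

end Fwd

section FwdRes
variable [Group G] [Finite G] [TopologicalSpace G] [DiscreteTopology G]
variable (w : FreeGroup ℕ)

local notation "H" => verbalSubgroup G w

lemma forward_restriction (hd : 0 < d)
    (F : Cfg d G → Cfg d G) (hFcont : Continuous F)
    (hFhom : ∀ a b : Cfg d G, F (a * b) = F a * F b)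
    (hFshift : ∀ (u : Fin d → ℤ) (c : Cfg d G), F (fun v => c (v + u)) = fun v => F c (v + u))
    (hT : TopologicallyTransitive F)
    (F' : {c : Cfg d G // ∀ v, c v ∈ H} → {c : Cfg d G // ∀ v, c v ∈ H})
    (hcompat : ∀ c, (F' c : Cfg d G) = F (c : Cfg d G)) :
    TopologicallyTransitive F' := by
  classical
  haveI : IsTopologicalGroup G :=
    { continuous_mul := continuous_of_discreteTopology
      continuous_inv := continuous_of_discreteTopology }
  intro A B hA hB ⟨a, haA⟩ ⟨b, hbB⟩
  obtain ⟨A', hA'open, hA'⟩ := isOpen_induced_iff.mp hA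
  obtain ⟨B', hB'open, hB'⟩ := isOpen_induced_iff.mp hB
  have haA' : (a : Cfg d G) ∈ A' := by rw [← hA'] at haA; exact haA
  have hbB' : (b : Cfg d G) ∈ B' := by rw [← hB'] at hbB; exact hbB
  obtain ⟨SA, hSA⟩ := exists_cyl_subset' hA'open haA'
  obtain ⟨SB, hSB⟩ := exists_cyl_subset' hB'open hbB'
  set S : Finset (Fin d → ℤ) := SA ∪ SB with hS
  obtain ⟨L, hL⟩ := uniform_fact (G := G) w
  -- encoding of generators
  set e : ℕ × ℕ × ℕ → ℕ := fun t => Nat.pair t.1 (Nat.pair t.2.1 t.2.2) with he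
  have einj : Function.Injective e := by
    intro t t' ht
    simp only [he] at ht
    obtain ⟨h1, h2⟩ := Nat.pair_eq_pair.mp ht
    obtain ⟨h3, h4⟩ := Nat.pair_eq_pair.mp h2
    exact Prod.ext h1 (Prod.ext h3 h4)
  -- spreading
  set f0 : Fin d := ⟨0, hd⟩ with hf0
  set Rb : ℕ := S.sup (fun v => (v f0).natAbs) with hRb
  have hSbound : ∀ v ∈ S, |v f0| ≤ (Rb : ℤ) := by
    intro v hv
    rw [Int.abs_eq_natAbs]
    exact_mod_cast Finset.le_sup (f := fun v => (v f0).natAbs) hv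
  set Dt : ℕ → (Fin d → ℤ) := fun i => fun l => if l = f0 then (i : ℤ) * (2*(Rb:ℤ)+1) else 0
    with hDt
  have hspacing : ∀ (i i' : ℕ) (v v' : Fin d → ℤ), v ∈ S → v' ∈ S →
      v + Dt i = v' + Dt i' → i = i' ∧ v = v' := by
    intro i i' v v' hv hv' heq
    have h0 := congrFun heq f0
    have h0' : v f0 + (i : ℤ) * (2*(Rb:ℤ)+1) = v' f0 + (i' : ℤ) * (2*(Rb:ℤ)+1) := by
      simpa [hDt] using h0
    obtain ⟨hb1a, hb1b⟩ := abs_le.mp (hSbound v hv)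
    obtain ⟨hb2a, hb2b⟩ := abs_le.mp (hSbound v' hv')
    have hRbnn : (0 : ℤ) ≤ (Rb : ℤ) := Int.ofNat_nonneg _
    have hee : i = i' := by
      by_contra hne
      have hne' : (i : ℤ) ≠ (i' : ℤ) := by exact_mod_cast hne
      rcases lt_or_gt_of_ne hne' with h | h
      · have h1 : (1:ℤ) ≤ (i' : ℤ) - (i : ℤ) := by
          have := Int.add_one_le_iff.mpr h; linarith
        have key : (2*(Rb:ℤ)+1) ≤ ((i' : ℤ) - (i : ℤ)) * (2*(Rb:ℤ)+1) := by
          have h2 : (0:ℤ) ≤ 2*(Rb:ℤ)+1 := by linarith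
          exact le_mul_of_one_le_left h2 h1
        have heq3 : ((i' : ℤ) - (i : ℤ)) * (2*(Rb:ℤ)+1) = v f0 - v' f0 := by
          rw [sub_mul]; linarith
        linarith
      · have h1 : (1:ℤ) ≤ (i : ℤ) - (i' : ℤ) := by
          have := Int.add_one_le_iff.mpr h; linarith
        have key : (2*(Rb:ℤ)+1) ≤ ((i : ℤ) - (i' : ℤ)) * (2*(Rb:ℤ)+1) := by
          have h2 : (0:ℤ) ≤ 2*(Rb:ℤ)+1 := by linarith
          exact le_mul_of_one_le_left h2 h1
        have heq3 : ((i : ℤ) - (i' : ℤ)) * (2*(Rb:ℤ)+1) = v' f0 - v f0 := by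
          rw [sub_mul]; linarith
        linarith
    subst hee
    exact ⟨rfl, add_right_cancel heq⟩
  -- the word
  set uWord : FreeGroup ℕ := ((List.range L).map (fun k =>
      (FreeGroup.map (fun r => e (k,0,r)) w) * ((FreeGroup.map (fun r => e (k,1,r)) w))⁻¹)).prod
    with huWord
  -- the evaluation homomorphisms
  set Φc : Cfg d G → (FreeGroup ℕ →* Cfg d G) :=
    fun c => FreeGroup.lift (fun i => fun v => c (v + Dt i)) with hΦc
  set Ψ : Cfg d G → Cfg d G := fun c => Φc c uWord with hΨ
  -- membership in the subgroup shift
  have hmem : ∀ c v, Ψ c v ∈ H := by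
    intro c v
    have h0 : Ψ c v = ((Pi.evalMonoidHom (fun _ : Fin d → ℤ => G) v).comp (Φc c)) uWord := rfl
    rw [h0, huWord, map_list_prod, List.map_map]
    apply Subgroup.list_prod_mem
    intro x hx
    simp only [List.mem_map, List.mem_range] at hx
    obtain ⟨k, hk, rfl⟩ := hx
    have h1 : (((Pi.evalMonoidHom (fun _ : Fin d → ℤ => G) v).comp (Φc c)) ∘
          (fun k => (FreeGroup.map (fun r => e (k,0,r)) w)
            * ((FreeGroup.map (fun r => e (k,1,r)) w))⁻¹)) k
        = ((((Pi.evalMonoidHom (fun _ : Fin d → ℤ => G) v).comp (Φc c)).comp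
            (FreeGroup.map (fun r => e (k,0,r)))) w)
          * (((((Pi.evalMonoidHom (fun _ : Fin d → ℤ => G) v).comp (Φc c)).comp
            (FreeGroup.map (fun r => e (k,1,r)))) w))⁻¹ := by
      show ((Pi.evalMonoidHom (fun _ : Fin d → ℤ => G) v).comp (Φc c)) _ = _
      rw [map_mul, map_inv]
      rfl
    rw [h1]
    exact mul_mem (Subgroup.subset_closure ⟨_, rfl⟩)
      (inv_mem (Subgroup.subset_closure ⟨_, rfl⟩))
  -- commutation with F
  set FH : Cfg d G →* Cfg d G := MonoidHom.mk' F hFhom with hFH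
  have hcomm : ∀ c, F (Ψ c) = Ψ (F c) := by
    intro c
    have hhom : FH.comp (Φc c) = Φc (F c) := by
      apply FreeGroup.ext_hom
      intro i
      show F ((Φc c) (FreeGroup.of i)) = (Φc (F c)) (FreeGroup.of i)
      rw [hΦc]
      simp only [FreeGroup.lift_apply_of]
      exact hFshift (Dt i) c
    show FH ((Φc c) uWord) = (Φc (F c)) uWord
    rw [← hhom]
    rfl
  -- continuity
  have hcontPsi : Continuous Ψ := by
    rw [hΨ]
    have key : ∀ x : FreeGroup ℕ, Continuous (fun c => Φc c x) := by
      intro x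
      induction x using FreeGroup.induction_on with
      | C1 =>
        exact continuous_const.congr (fun c => (map_one (Φc c)).symm)
      | of i =>
        refine (continuous_pi (fun v => continuous_apply (v + Dt i))).congr (fun c => ?_)
        show (fun v => c (v + Dt i)) = Φc c (FreeGroup.of i)
        rw [hΦc, FreeGroup.lift_apply_of]
      | inv_of i ih =>
        exact ih.inv.congr (fun c => (map_inv (Φc c) _).symm)
      | mul x y ihx ihy =>
        exact (ihx.mul ihy).congr (fun c => (map_mul (Φc c) x y).symm)
    exact key uWord
  -- realization of patterns
  have hreal : ∀ pa : Cfg d G, (∀ v, pa v ∈ H) → ∃ c : Cfg d G, ∀ v ∈ S, Ψ c v = pa v := by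
    intro pa hpa
    have hch : ∀ v : Fin d → ℤ, ∃ αβ : (ℕ → (FreeGroup ℕ →* G)) × (ℕ → (FreeGroup ℕ →* G)),
        ((List.range L).map (fun k => αβ.1 k w * (αβ.2 k w)⁻¹)).prod = pa v := by
      intro v
      obtain ⟨α, β, hs⟩ := hL (pa v) (hpa v)
      exact ⟨(α, β), hs⟩
    choose αβ hαβ using hch
    set dat : ((Fin d → ℤ) × ℕ × ℕ × ℕ) → G := fun q =>
      (if q.2.2.1 = 0 then (αβ q.1).1 q.2.1 else (αβ q.1).2 q.2.1) (FreeGroup.of q.2.2.2)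
      with hdat
    set cpa : Cfg d G := fun z =>
      if h : ∃ q : ((Fin d → ℤ) × ℕ × ℕ × ℕ), q.1 ∈ S ∧ z = q.1 + Dt (e q.2) then
        dat h.choose else 1 with hcpa
    have hkey : ∀ (v' : Fin d → ℤ), v' ∈ S → ∀ (k ε r : ℕ),
        cpa (v' + Dt (e (k,ε,r))) = dat (v',k,ε,r) := by
      intro v' hv' k ε r
      have hex : ∃ q : ((Fin d → ℤ) × ℕ × ℕ × ℕ),
          q.1 ∈ S ∧ v' + Dt (e (k,ε,r)) = q.1 + Dt (e q.2) := ⟨(v',k,ε,r), hv', rfl⟩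
      rw [hcpa]
      simp only [dif_pos hex]
      obtain ⟨hmem', heq'⟩ := hex.choose_spec
      obtain ⟨hie, hve⟩ := hspacing (e hex.choose.2) (e (k,ε,r)) hex.choose.1 v' hmem' hv'
        heq'.symm
      have hq : hex.choose = (v',k,ε,r) := by
        have h2 : hex.choose.2 = (k,ε,r) := einj hie
        exact Prod.ext hve h2
      rw [hq]
    refine ⟨cpa, fun v' hv' => ?_⟩
    have h0 : Ψ cpa v' = ((Pi.evalMonoidHom (fun _ : Fin d → ℤ => G) v').comp (Φc cpa)) uWord :=
      rfl
    rw [h0, huWord, map_list_prod, List.map_map, ← hαβ v']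
    apply congrArg List.prod
    apply List.map_congr_left
    intro k hk
    show ((Pi.evalMonoidHom (fun _ : Fin d → ℤ => G) v').comp (Φc cpa)) _ = _
    rw [map_mul, map_inv]
    have hα : (((Pi.evalMonoidHom (fun _ : Fin d → ℤ => G) v').comp (Φc cpa)).comp
        (FreeGroup.map (fun r => e (k,0,r)))) = (αβ v').1 k := by
      apply FreeGroup.ext_hom
      intro r
      show (Φc cpa) (FreeGroup.map (fun r => e (k,0,r)) (FreeGroup.of r)) v' = _
      rw [FreeGroup.map.of, hΦc]
      simp only [FreeGroup.lift_apply_of]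
      rw [hkey v' hv' k 0 r, hdat]
      simp
    have hβ : (((Pi.evalMonoidHom (fun _ : Fin d → ℤ => G) v').comp (Φc cpa)).comp
        (FreeGroup.map (fun r => e (k,1,r)))) = (αβ v').2 k := by
      apply FreeGroup.ext_hom
      intro r
      show (Φc cpa) (FreeGroup.map (fun r => e (k,1,r)) (FreeGroup.of r)) v' = _
      rw [FreeGroup.map.of, hΦc]
      simp only [FreeGroup.lift_apply_of]
      rw [hkey v' hv' k 1 r, hdat]
      simp
    have hα' : ((Pi.evalMonoidHom (fun _ : Fin d → ℤ => G) v').comp (Φc cpa))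
        ((FreeGroup.map (fun r => e (k,0,r))) w) = (αβ v').1 k w := by
      rw [← hα]; rfl
    have hβ' : ((Pi.evalMonoidHom (fun _ : Fin d → ℤ => G) v').comp (Φc cpa))
        ((FreeGroup.map (fun r => e (k,1,r))) w) = (αβ v').2 k w := by
      rw [← hβ]; rfl
    rw [hα', hβ']
  -- the subtype-valued map
  set ΨS : Cfg d G → {c : Cfg d G // ∀ v, c v ∈ H} := fun c => ⟨Ψ c, hmem c⟩ with hΨS
  -- apply transitivity of F
  obtain ⟨ca, hca⟩ := hreal (a : Cfg d G) a.2
  obtain ⟨cb, hcb⟩ := hreal (b : Cfg d G) b.2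
  have hUopen : IsOpen (Ψ ⁻¹' A') := hA'open.preimage hcontPsi
  have hVopen : IsOpen (Ψ ⁻¹' B') := hB'open.preimage hcontPsi
  have hcaU : ca ∈ Ψ ⁻¹' A' := by
    apply hSA
    intro v hv
    exact hca v (Finset.mem_union_left _ hv)
  have hcbV : cb ∈ Ψ ⁻¹' B' := by
    apply hSB
    intro v hv
    exact hcb v (Finset.mem_union_right _ hv)
  obtain ⟨n, y, ⟨x, hxU, hxy⟩, hyV⟩ := hT (Ψ ⁻¹' A') (Ψ ⁻¹' B') hUopen hVopen ⟨ca, hcaU⟩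
    ⟨cb, hcbV⟩
  -- iterate compatibility
  have hiterval : ∀ (m : ℕ) (c : Cfg d G), ((F'^[m] (ΨS c)) : Cfg d G) = Ψ (F^[m] c) := by
    intro m
    induction m with
    | zero => intro c; rfl
    | succ m ih =>
      intro c
      rw [Function.iterate_succ_apply', Function.iterate_succ_apply']
      rw [hcompat, ih c, hcomm]
  refine ⟨n, F'^[n] (ΨS x), ⟨ΨS x, ?_, rfl⟩, ?_⟩
  · rw [← hA']
    exact hxU
  · rw [← hB']
    show ((F'^[n] (ΨS x)) : Cfg d G) ∈ B'
    rw [hiterval n x, hxy]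
    exact hyV

end FwdRes
end FwdAll

section QuotAll
variable {G : Type*}
section Quot
variable [Group G]

lemma verbal_normal (w : FreeGroup ℕ) : (verbalSubgroup G w).Normal := by
  constructor
  intro x hx g
  induction hx using Subgroup.closure_induction with
  | mem y hy =>
    obtain ⟨φ, rfl⟩ := hy
    refine Subgroup.subset_closure ⟨((MulAut.conj g).toMonoidHom.comp φ), ?_⟩
    simp [MulAut.conj_apply]
  | one => simpa using (verbalSubgroup G w).one_mem
  | mul x y hx hy ihx ihy =>
    have h : g * (x * y) * g⁻¹ = (g * x * g⁻¹) * (g * y * g⁻¹) := by group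
    rw [h]; exact mul_mem ihx ihy
  | inv x hx ihx =>
    have h : g * x⁻¹ * g⁻¹ = (g * x * g⁻¹)⁻¹ := by group
    rw [h]; exact inv_mem ihx

variable (H : Subgroup G)

lemma quot_discrete [TopologicalSpace G] [DiscreteTopology G] : DiscreteTopology (G ⧸ H) := by
  apply discreteTopology_iff_forall_isOpen.mpr
  intro s
  have h : Topology.IsQuotientMap (QuotientGroup.mk : G → G ⧸ H) := isQuotientMap_quot_mk
  rw [← h.isOpen_preimage]
  exact isOpen_discrete _

/-- the projection -/
def proj (H : Subgroup G) : Cfg d G → Cfg d (G ⧸ H) := fun c v => (QuotientGroup.mk (c v))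

lemma proj_surj : Function.Surjective (proj (d := d) H) := by
  intro ξ
  exact ⟨fun v => (ξ v).out, funext fun v => Quotient.out_eq' (ξ v)⟩

lemma proj_cont [TopologicalSpace G] [DiscreteTopology G] :
    Continuous (proj (d := d) H) := by
  haveI := quot_discrete (G := G) H
  exact continuous_pi fun v =>
    continuous_of_discreteTopology.comp (continuous_apply v)

lemma proj_lift (ξ : Cfg d (G ⧸ H)) (x₀ : Cfg d G) (S : Finset (Fin d → ℤ))
    (h : ∀ v ∈ S, ξ v = QuotientGroup.mk (x₀ v)) :
    ∃ c : Cfg d G, proj H c = ξ ∧ ∀ v ∈ S, c v = x₀ v := by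
  classical
  refine ⟨fun v => if v ∈ S then x₀ v else (ξ v).out, funext fun v => ?_, fun v hv => by simp [hv]⟩
  by_cases hv : v ∈ S
  · simp only [proj, hv, if_true]
    exact (h v hv).symm
  · simp only [proj, hv, if_false]
    exact Quotient.out_eq' (ξ v)

lemma proj_isOpenMap [TopologicalSpace G] [DiscreteTopology G] :
    IsOpenMap (proj (d := d) H) := by
  haveI := quot_discrete (G := G) H
  intro O hO
  rw [isOpen_iff_forall_mem_open]
  rintro ξ ⟨x₀, hx₀O, rfl⟩
  obtain ⟨S, u, hIu, hsub⟩ := isOpen_pi_iff.mp hO x₀ hx₀O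
  have hS : ∀ c : Cfg d G, (∀ a ∈ S, c a = x₀ a) → c ∈ O :=
    fun c hc => hsub (fun a ha => by rw [hc a ha]; exact (hIu a ha).2)
  refine ⟨cyl (proj H x₀) S, ?_, ?_, fun v hv => rfl⟩
  · intro η hη
    obtain ⟨c, hc1, hc2⟩ := proj_lift H η x₀ S (fun v hv => hη v hv)
    exact ⟨c, hS c hc2, hc1⟩
  · -- cylinders are open
    have heq : cyl (proj H x₀) S = ⋂ v ∈ S, (fun c : Cfg d (G ⧸ H) => c v) ⁻¹' {proj H x₀ v} := by
      ext c; simp [cyl]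
    rw [heq]
    exact isOpen_biInter_finset
      (fun v _ => (continuous_apply v).isOpen_preimage _ (isOpen_discrete _))

lemma proj_mul [hn : H.Normal] (a b : Cfg d G) :
    proj H (a * b) = proj H a * proj H b := by
  funext v
  show (QuotientGroup.mk ((a * b) v) : G ⧸ H) = QuotientGroup.mk (a v) * QuotientGroup.mk (b v)
  rw [Pi.mul_apply, QuotientGroup.mk_mul]

/-- forward direction, quotient system -/
lemma forward_quotient [TopologicalSpace G] [DiscreteTopology G]
    (F : Cfg d G → Cfg d G) (hT : TopologicallyTransitive F)
    (Ft : Cfg d (G ⧸ H) → Cfg d (G ⧸ H))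
    (hFt : Ft ∘ (proj H) = (proj H) ∘ F) :
    TopologicallyTransitive Ft := by
  intro A B hA hB hAne hBne
  have hiter : ∀ (n : ℕ) (c : Cfg d G), Ft^[n] (proj H c) = proj H (F^[n] c) := by
    intro n
    induction n with
    | zero => intro c; rfl
    | succ n ih =>
      intro c
      rw [Function.iterate_succ_apply', Function.iterate_succ_apply', ih]
      exact congrFun hFt (F^[n] c)
  obtain ⟨n, y, ⟨x, hxU, hxy⟩, hyV⟩ := hT ((proj H) ⁻¹' A) ((proj H) ⁻¹' B)
    (hA.preimage (proj_cont H)) (hB.preimage (proj_cont H))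
    (by obtain ⟨ξ, hξ⟩ := hAne
        obtain ⟨c, hc⟩ := proj_surj (d := d) H ξ
        exact ⟨c, by rw [Set.mem_preimage, hc]; exact hξ⟩)
    (by obtain ⟨ξ, hξ⟩ := hBne
        obtain ⟨c, hc⟩ := proj_surj (d := d) H ξ
        exact ⟨c, by rw [Set.mem_preimage, hc]; exact hξ⟩)
  refine ⟨n, proj H y, ⟨proj H x, hxU, ?_⟩, hyV⟩
  rw [hiter n x, hxy]
end Quot
end QuotAll

section Conj
lemma TT_conj {X Y : Type*} [TopologicalSpace X] [TopologicalSpace Y]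
    (T : X → X) (T' : Y → Y) (e : X → Y) (einv : Y → X)
    (hconte : Continuous e) (hcontinv : Continuous einv)
    (hinv : ∀ y, e (einv y) = y) (hconj : ∀ x, e (T x) = T' (e x))
    (hT : TopologicallyTransitive T) : TopologicallyTransitive T' := by
  intro A B hA hB hAne hBne
  obtain ⟨a0, ha0⟩ := hAne
  obtain ⟨b0, hb0⟩ := hBne
  have hiter : ∀ (n : ℕ) (x : X), e (T^[n] x) = T'^[n] (e x) := by
    intro n
    induction n with
    | zero => intro x; rfl
    | succ n ih =>
      intro x
      rw [Function.iterate_succ_apply', Function.iterate_succ_apply', hconj, ih]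
  obtain ⟨n, y, ⟨x, hxU, hxy⟩, hyV⟩ := hT (e ⁻¹' A) (e ⁻¹' B)
    (hA.preimage hconte) (hB.preimage hconte)
    ⟨einv a0, by rw [Set.mem_preimage, hinv]; exact ha0⟩
    ⟨einv b0, by rw [Set.mem_preimage, hinv]; exact hb0⟩
  refine ⟨n, e y, ⟨e x, hxU, ?_⟩, hyV⟩
  rw [← hxy]
  exact (hiter n x).symm
end Conj

end GCA

theorem stmt0 (d : ℕ) (hd : 0 < d) (G : Type*) [Group G] [Finite G]
    [TopologicalSpace G] [DiscreteTopology G]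
    (F : ((Fin d → ℤ) → G) → ((Fin d → ℤ) → G))
    (hFcont : Continuous F)
    (hFhom : ∀ a b : (Fin d → ℤ) → G, F (a * b) = F a * F b)
    (hFshift : ∀ (u : Fin d → ℤ) (c : (Fin d → ℤ) → G),
      F (fun v => c (v + u)) = fun v => F c (v + u))
    (w : FreeGroup ℕ) (H : Subgroup G) (hH : H = verbalSubgroup G w) :
    TopologicallyTransitive F ↔
      ((∀ F' : {c : (Fin d → ℤ) → G // ∀ v, c v ∈ H} →
               {c : (Fin d → ℤ) → G // ∀ v, c v ∈ H},
          (∀ c, (F' c : (Fin d → ℤ) → G) = F (c : (Fin d → ℤ) → G)) →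
          TopologicallyTransitive F') ∧
       (∀ Ft : ((Fin d → ℤ) → G ⧸ H) → ((Fin d → ℤ) → G ⧸ H),
          (Ft ∘ (fun c v => (QuotientGroup.mk (c v) : G ⧸ H)) =
            (fun c v => (QuotientGroup.mk (c v) : G ⧸ H)) ∘ F) →
          TopologicallyTransitive Ft)) := by
  classical
  subst hH
  haveI hnorm : (verbalSubgroup G w).Normal := GCA.verbal_normal w
  haveI hqd : DiscreteTopology (G ⧸ verbalSubgroup G w) := GCA.quot_discrete _
  constructor
  · intro hT
    refine ⟨?_, ?_⟩
    · intro F' hcompat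
      exact GCA.forward_restriction w hd F hFcont hFhom hFshift hT F' hcompat
    · intro Ft hFt
      exact GCA.forward_quotient (verbalSubgroup G w) F hT Ft hFt
  · rintro ⟨h1, h2⟩
    intro U V hU hV hUne hVne
    obtain ⟨x₀, hx₀⟩ := hUne
    obtain ⟨y₀, hy₀⟩ := hVne
    obtain ⟨S₁, hS₁⟩ := GCA.exists_cyl_subset' hU hx₀
    obtain ⟨S₂, hS₂⟩ := GCA.exists_cyl_subset' hV hy₀
    set S := S₁ ∪ S₂ with hSdef
    -- hom bundle and invariance of the subgroup shift
    have hmemF : ∀ c : (Fin d → ℤ) → G, (∀ v, c v ∈ verbalSubgroup G w) →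
        ∀ v, F c v ∈ verbalSubgroup G w := by
      intro c hc v
      exact GCA.verbal_invariant w (MonoidHom.mk' F hFhom) c hc v
    -- restriction system on the subgroup alphabet
    set jmap : GCA.Cfg d {x : G // x ∈ verbalSubgroup G w} → ((Fin d → ℤ) → G) :=
      fun c v => (c v : G) with hjmapdef
    have hjmem : ∀ c : GCA.Cfg d {x : G // x ∈ verbalSubgroup G w},
        ∀ v, jmap c v ∈ verbalSubgroup G w := fun c v => (c v).2
    set F_H : GCA.Cfg d {x : G // x ∈ verbalSubgroup G w} →
        GCA.Cfg d {x : G // x ∈ verbalSubgroup G w} :=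
      fun c v => ⟨F (jmap c) v, hmemF (jmap c) (hjmem c) v⟩ with hFHdef
    set F'₀ : {c : (Fin d → ℤ) → G // ∀ v, c v ∈ verbalSubgroup G w} →
        {c : (Fin d → ℤ) → G // ∀ v, c v ∈ verbalSubgroup G w} :=
      fun a => ⟨F a.1, hmemF a.1 a.2⟩ with hF0def
    have hTF' : TopologicallyTransitive F'₀ := h1 F'₀ (fun c => rfl)
    -- transfer to the configuration space over the subgroup alphabet
    have hjc : Continuous jmap :=
      continuous_pi fun v => continuous_subtype_val.comp (continuous_apply v)
    have hTFH : TopologicallyTransitive F_H := by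
      refine GCA.TT_conj F'₀ F_H
        (fun a => (fun v => ⟨a.1 v, a.2 v⟩ : GCA.Cfg d {x : G // x ∈ verbalSubgroup G w}))
        (fun c => ⟨jmap c, hjmem c⟩) ?_ ?_ ?_ ?_ hTF'
      · exact continuous_pi fun v =>
          Continuous.subtype_mk ((continuous_apply v).comp continuous_subtype_val) _
      · exact Continuous.subtype_mk hjc _
      · intro y
        funext v
        rfl
      · intro a
        funext v
        rfl
    have hFHcont : Continuous F_H := continuous_pi fun v =>
      Continuous.subtype_mk ((continuous_apply v).comp (hFcont.comp hjc)) _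
    have hFHmul : ∀ a b : GCA.Cfg d {x : G // x ∈ verbalSubgroup G w},
        F_H (a * b) = F_H a * F_H b := by
      intro a b
      funext v
      apply Subtype.ext
      show F (jmap (a * b)) v = (F (jmap a) * F (jmap b)) v
      have hj : jmap (a * b) = jmap a * jmap b := rfl
      rw [hj, hFhom]
    have hFHsh : ∀ (u : Fin d → ℤ) (c : GCA.Cfg d {x : G // x ∈ verbalSubgroup G w}),
        F_H (fun v => c (v + u)) = fun v => F_H c (v + u) := by
      intro u c
      funext v
      apply Subtype.ext
      show F (jmap (fun v => c (v + u))) v = F (jmap c) (v + u)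
      have hj : jmap (fun v => c (v + u)) = fun v => jmap c (v + u) := rfl
      rw [hj, hFshift]
    have hjiter : ∀ (m : ℕ) (c : GCA.Cfg d {x : G // x ∈ verbalSubgroup G w}),
        jmap (F_H^[m] c) = F^[m] (jmap c) := by
      intro m
      induction m with
      | zero => intro c; rfl
      | succ m ih =>
        intro c
        rw [Function.iterate_succ_apply', Function.iterate_succ_apply', ← ih]
    -- the quotient system
    set Ft₀ : GCA.Cfg d (G ⧸ verbalSubgroup G w) → GCA.Cfg d (G ⧸ verbalSubgroup G w) :=
      fun ξ => GCA.proj (verbalSubgroup G w) (F (fun v => (ξ v).out)) with hFt0def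
    have hwd : ∀ c c' : (Fin d → ℤ) → G,
        GCA.proj (verbalSubgroup G w) c = GCA.proj (verbalSubgroup G w) c' →
        GCA.proj (verbalSubgroup G w) (F c) = GCA.proj (verbalSubgroup G w) (F c') := by
      intro c c' h
      have hη : ∀ v, ((c⁻¹ * c') v) ∈ verbalSubgroup G w := by
        intro v
        have h2 := congrFun h v
        exact QuotientGroup.eq.mp h2
      have hc' : c' = c * (c⁻¹ * c') := by rw [mul_inv_cancel_left]
      rw [hc', hFhom]
      funext v
      show QuotientGroup.mk (F c v) = QuotientGroup.mk ((F c * F (c⁻¹ * c')) v)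
      rw [Pi.mul_apply]
      exact (QuotientGroup.mk_mul_of_mem (F c v) (hmemF (c⁻¹ * c') hη v)).symm
    have hcompat₀ : ∀ c, Ft₀ (GCA.proj (verbalSubgroup G w) c)
        = GCA.proj (verbalSubgroup G w) (F c) := by
      intro c
      apply hwd
      funext v
      exact Quotient.out_eq' ((GCA.proj (verbalSubgroup G w) c) v)
    have hTFt : TopologicallyTransitive Ft₀ := h2 Ft₀ (funext fun c => hcompat₀ c)
    have hmulFt : ∀ a b, Ft₀ (a * b) = Ft₀ a * Ft₀ b := by
      intro a b
      obtain ⟨ca, rfl⟩ := GCA.proj_surj (d := d) (verbalSubgroup G w) a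
      obtain ⟨cb, rfl⟩ := GCA.proj_surj (d := d) (verbalSubgroup G w) b
      calc Ft₀ (GCA.proj (verbalSubgroup G w) ca * GCA.proj (verbalSubgroup G w) cb)
          = Ft₀ (GCA.proj (verbalSubgroup G w) (ca * cb)) := by
            rw [GCA.proj_mul]
        _ = GCA.proj (verbalSubgroup G w) (F (ca * cb)) := hcompat₀ _
        _ = GCA.proj (verbalSubgroup G w) (F ca * F cb) := by rw [hFhom]
        _ = GCA.proj (verbalSubgroup G w) (F ca) * GCA.proj (verbalSubgroup G w) (F cb) :=
            GCA.proj_mul _ _ _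
        _ = Ft₀ (GCA.proj (verbalSubgroup G w) ca) * Ft₀ (GCA.proj (verbalSubgroup G w) cb) := by
            rw [hcompat₀, hcompat₀]
    have hcontFt : Continuous Ft₀ := by
      rw [continuous_def]
      intro O hO
      have h1 : IsOpen ((GCA.proj (verbalSubgroup G w)) ⁻¹' (Ft₀ ⁻¹' O)) := by
        have heq : (GCA.proj (verbalSubgroup G w)) ⁻¹' (Ft₀ ⁻¹' O)
            = (fun c => GCA.proj (verbalSubgroup G w) (F c)) ⁻¹' O := by
          ext c
          simp only [Set.mem_preimage, hcompat₀ c]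
        rw [heq]
        exact hO.preimage ((GCA.proj_cont _).comp hFcont)
      have h2 : Ft₀ ⁻¹' O = GCA.proj (verbalSubgroup G w) ''
          ((GCA.proj (verbalSubgroup G w)) ⁻¹' (Ft₀ ⁻¹' O)) :=
        (Set.image_preimage_eq _ (GCA.proj_surj _)).symm
      rw [h2]
      exact GCA.proj_isOpenMap _ _ h1
    -- syndetic times for the quotient system
    obtain ⟨Kg, hKg⟩ := GCA.syndetic Ft₀ hcontFt hmulFt hd hTFt
      (GCA.cyl (GCA.proj (verbalSubgroup G w) x₀) S) (GCA.cyl (GCA.proj (verbalSubgroup G w) y₀) S)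
      (GCA.isOpen_cyl' _ _) (GCA.isOpen_cyl' _ _)
      ⟨_, GCA.mem_cyl_self _ _⟩ ⟨_, GCA.mem_cyl_self _ _⟩
    -- thick fullness for the restriction system
    obtain ⟨r, hr⟩ := GCA.thickFull F_H hFHcont hFHmul hFHsh hd hTFH S Kg
    obtain ⟨n, ξ, hrn, hnr, hξU, hξV⟩ := hKg r
    -- lift ξ to a configuration agreeing with x₀ on S
    obtain ⟨c, hcπ, hcS⟩ := GCA.proj_lift (verbalSubgroup G w) ξ x₀ S (fun v hv => hξU v hv)
    have hiter₀ : ∀ (m : ℕ) (c : (Fin d → ℤ) → G),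
        Ft₀^[m] (GCA.proj (verbalSubgroup G w) c) = GCA.proj (verbalSubgroup G w) (F^[m] c) := by
      intro m
      induction m with
      | zero => intro c; rfl
      | succ m ih =>
        intro c
        rw [Function.iterate_succ_apply', Function.iterate_succ_apply', ih, hcompat₀]
    have hFn : GCA.proj (verbalSubgroup G w) (F^[n] c)
        ∈ GCA.cyl (GCA.proj (verbalSubgroup G w) y₀) S := by
      rw [← hiter₀, hcπ]
      exact hξV
    -- correction pattern
    set p : (Fin d → ℤ) → G := fun v => (F^[n] c v)⁻¹ * y₀ v with hpdef
    have hpH : ∀ v, v ∈ S → p v ∈ verbalSubgroup G w := by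
      intro v hv
      have h3 := hFn v hv
      exact QuotientGroup.eq.mp h3
    have hjKg : n - r ≤ Kg := by omega
    set pK : GCA.Cfg d {x : G // x ∈ verbalSubgroup G w} :=
      fun v => if h : v ∈ S then ⟨p v, hpH v h⟩ else 1 with hpKdef
    obtain ⟨gK, hgK1, hgK2⟩ := hr (n - r) hjKg pK
    set g : (Fin d → ℤ) → G := jmap gK with hgdef
    have hg1 : ∀ v ∈ S, g v = 1 := by
      intro v hv
      show (gK v : G) = 1
      rw [hgK1 v hv]
      rfl
    have hg2 : ∀ v ∈ S, F^[n] g v = p v := by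
      intro v hv
      have h1 := hgK2 v hv
      have h2 : r + (n - r) = n := by omega
      rw [h2] at h1
      have h3 : (F_H^[n] gK v : G) = F^[n] g v := by
        rw [show ((F_H^[n] gK v : G)) = jmap (F_H^[n] gK) v from rfl, hjiter]
      rw [← h3, h1, hpKdef]
      simp [hv]
    -- the witness
    refine ⟨n, F^[n] (c * g), ⟨c * g, ?_, rfl⟩, ?_⟩
    · apply hS₁
      intro v hv
      have hvS : v ∈ S := Finset.mem_union_left _ hv
      show c v * g v = x₀ v
      rw [hg1 v hvS, mul_one, hcS v hvS]
    · apply hS₂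
      intro v hv
      have hvS : v ∈ S := Finset.mem_union_right _ hv
      have h4 : F^[n] (c * g) = F^[n] c * F^[n] g := GCA.iter_mul F hFhom n c g
      show F^[n] (c * g) v = y₀ v
      rw [h4]
      show F^[n] c v * F^[n] g v = y₀ v
      rw [hg2 v hvS, hpdef]
      exact mul_inv_cancel_left _ _
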